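/- Let α ∈ (0,1), t₀ < t₁, and fix β ∈ (1, 2-α). Define f : (t₀,t₁] → ℝ by f(t) = (2(t₁-t₀)/(t-t₀)) · (ln(2(t₁-t₀)/(t-t₀)))^{-β}. Then f ∈ L^1(t₀,t₁;ℝ) with ‖f‖_{L^1} = 2(t₁-t₀)(ln 2)^{1-β}/(β-1), but the Riemann–Liouville fractional integral J^α f does not belong to L^{1/(1-α)}(t₀,t₁;ℝ). -/

import Mathlib

open MeasureTheory Set Filter

lemma haslog (A p : ℝ) (hA : 0 < A) {u : ℝ} (hu : 0 < u) (huA : u < A) :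
    HasDerivAt (fun v => Real.log (A / v) ^ p) (p * Real.log (A / u) ^ (p - 1) * (-1 / u)) u := by
  have hAu : 1 < A / u := (one_lt_div hu).2 huA
  have hlogpos : 0 < Real.log (A / u) := Real.log_pos hAu
  have h1 : HasDerivAt (fun v : ℝ => Real.log A - Real.log v) (-1 / u) u := by
    simpa [neg_div] using (Real.hasDerivAt_log hu.ne').const_sub (Real.log A)
  have h2 : HasDerivAt (fun v : ℝ => Real.log (A / v)) (-1 / u) u := by
    apply h1.congr_of_eventuallyEq
    filter_upwards [eventually_gt_nhds hu] with v hv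
    rw [Real.log_div hA.ne' hv.ne']
  have h3 := (Real.hasDerivAt_rpow_const (p := p) (Or.inl hlogpos.ne')).comp u h2
  simpa [mul_assoc, Function.comp_def] using h3

lemma tendslog (A p : ℝ) (hA : 0 < A) (hp : 0 < p) :
    Tendsto (fun v => Real.log (A / v) ^ (-p)) (nhdsWithin 0 (Set.Ioi (0:ℝ))) (nhds 0) := by
  have h1 : Tendsto (fun v : ℝ => A / v) (nhdsWithin 0 (Set.Ioi (0:ℝ))) atTop := by
    simpa [div_eq_mul_inv] using (tendsto_inv_nhdsGT_zero (𝕜 := ℝ)).const_mul_atTop hA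
  exact (tendsto_rpow_neg_atTop hp).comp (Real.tendsto_log_atTop.comp h1)

lemma contlog (A B p : ℝ) (hA : 0 < A) (hB : B < A) (hp : p < 0) :
    ContinuousOn (fun v => Real.log (A / v) ^ p) (Set.Icc 0 B) := by
  intro x hx
  rcases eq_or_lt_of_le hx.1 with h0 | h0
  · subst h0
    have hval : Real.log (A / 0) ^ p = 0 := by
      simp [Real.zero_rpow hp.ne]
    have key : Tendsto (fun v => Real.log (A / v) ^ p) (nhdsWithin 0 (Set.Ioi (0:ℝ)))
        (nhds (Real.log (A / 0) ^ p)) := by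
      rw [hval]
      simpa using tendslog A (-p) hA (by linarith)
    have h1 : ContinuousWithinAt (fun v => Real.log (A / v) ^ p) (Set.Ioi (0:ℝ)) 0 := key
    exact h1.insert.mono (fun y hy => by
      rcases eq_or_lt_of_le hy.1 with h | h
      · exact Or.inl h.symm
      · exact Or.inr h)
  · exact ((haslog A p hA h0 (lt_of_le_of_lt hx.2 hB)).continuousAt).continuousWithinAt

/-- Riemann–Liouville fractional integral of order `α` at `t₀`. -/
noncomputable def RL (α t₀ : ℝ) (f : ℝ → ℝ) (t : ℝ) : ℝ :=
  (1 / Real.Gamma α) * ∫ s in t₀..t, (t - s) ^ (α - 1) * f s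

theorem stmt13 (α β t₀ t₁ : ℝ) (hα : 0 < α) (hα1 : α < 1) (ht : t₀ < t₁)
    (hβ1 : 1 < β) (hβ2 : β < 2 - α)
    (f : ℝ → ℝ)
    (hf : f = fun t => (2 * (t₁ - t₀) / (t - t₀)) *
      (Real.log (2 * (t₁ - t₀) / (t - t₀))) ^ (-β)) :
    IntegrableOn f (Set.Ioc t₀ t₁) ∧
    (∫ t in Set.Ioc t₀ t₁, |f t|) =
      2 * (t₁ - t₀) * (Real.log 2) ^ (1 - β) / (β - 1) ∧
    ¬ MemLp (RL α t₀ f) (ENNReal.ofReal (1 / (1 - α)))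
        (volume.restrict (Set.Ioc t₀ t₁)) := by
  set L : ℝ := t₁ - t₀ with hL
  have hL0 : 0 < L := by simp [hL]; linarith
  set A : ℝ := 2 * L with hAdef
  have hA : 0 < A := by positivity
  have hLA : L < A := by simp [hAdef]; linarith
  -- antiderivative of f
  set Fc : ℝ → ℝ := fun t => (A / (β - 1)) * Real.log (A / (t - t₀)) ^ (1 - β) with hFc
  have hβ0 : (0:ℝ) < β - 1 := by linarith
  have hc2 : (0:ℝ) < A / (β - 1) := by positivity
  -- f nonneg and derivative
  have hderiv : ∀ t ∈ Set.Ioo t₀ t₁, HasDerivAt Fc (f t) t := by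
    intro t htm
    have hu : 0 < t - t₀ := by linarith [htm.1]
    have huA : t - t₀ < A := by simp [hAdef, hL]; linarith [htm.2]
    have h1 := (haslog A (1 - β) hA hu huA).comp t ((hasDerivAt_id t).sub_const t₀)
    have h2 := h1.const_mul (A / (β - 1))
    convert h2 using 1
    · rfl
    · rfl
    · rfl
    rw [hf]
    have hlog : (0:ℝ) < Real.log (A / (t - t₀)) :=
      Real.log_pos ((one_lt_div hu).2 huA)
    have hexp : (1 - β - 1 : ℝ) = -β := by ring
    rw [hexp]
    field_simp
    ring
  have hcont : ContinuousOn Fc (Set.Icc t₀ t₁) := by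
    have hmaps : Set.MapsTo (fun t => t - t₀) (Set.Icc t₀ t₁) (Set.Icc 0 L) := by
      intro t htm
      simp only [Set.mem_Icc] at htm ⊢
      exact ⟨by linarith [htm.1], by rw [hL]; linarith [htm.2]⟩
    have h1 := (contlog A L (1 - β) hA hLA (by linarith)).comp
      (continuous_sub_right t₀).continuousOn hmaps
    exact h1.const_smul (A / (β - 1)) |>.congr (fun x _ => by simp [hFc, smul_eq_mul])
  have hfnn : ∀ t ∈ Set.Ioc t₀ t₁, 0 ≤ f t := by
    intro t htm
    have hu : 0 < t - t₀ := by linarith [htm.1]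
    rw [hf]
    have : 0 ≤ 2 * (t₁ - t₀) / (t - t₀) := by positivity
    exact mul_nonneg this (Real.rpow_nonneg (Real.log_nonneg (by
      rw [le_div_iff₀ hu]; simp [hL] at *; nlinarith [htm.2])) _)
  have hfA : ∀ t, f t = (A / (t - t₀)) * Real.log (A / (t - t₀)) ^ (-β) := by
    intro t; rw [hf]
  -- Part 1
  have hint : IntegrableOn f (Set.Ioc t₀ t₁) :=
    intervalIntegral.integrableOn_deriv_of_nonneg hcont hderiv
      (fun x hx => hfnn x ⟨hx.1, hx.2.le⟩)
  have hFc0 : Fc t₀ = 0 := by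
    simp [hFc, Real.zero_rpow (show (1:ℝ) - β ≠ 0 by linarith)]
  have hFcval : ∀ t, t₀ < t → t ≤ t₁ → (∫ s in t₀..t, f s) = Fc t := by
    intro t ht1 ht2
    have := intervalIntegral.integral_eq_sub_of_hasDerivAt_of_le ht1.le
      (hcont.mono (Set.Icc_subset_Icc le_rfl ht2))
      (fun x hx => hderiv x ⟨hx.1, lt_of_lt_of_le hx.2 ht2⟩)
      ((intervalIntegrable_iff_integrableOn_Ioc_of_le ht1.le).2
        (hint.mono_set (Set.Ioc_subset_Ioc le_rfl ht2)))
    rw [this, hFc0, sub_zero]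
  -- Part 2
  have hval : (∫ t in Set.Ioc t₀ t₁, |f t|) =
      2 * (t₁ - t₀) * (Real.log 2) ^ (1 - β) / (β - 1) := by
    rw [setIntegral_congr_fun measurableSet_Ioc
      (fun t htm => abs_of_nonneg (hfnn t htm))]
    rw [← intervalIntegral.integral_of_le ht.le, hFcval t₁ ht le_rfl]
    have hAL : A / (t₁ - t₀) = 2 := by
      rw [hAdef, hL, mul_div_assoc, div_self (sub_ne_zero.2 ht.ne'), mul_one]
    rw [hFc]
    simp only [hAL]
    rw [hAdef, hL]
    ring
  refine ⟨hint, hval, ?_⟩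
  -- Part 3
  intro hmem
  set q : ℝ := 1 / (1 - α) with hqdef
  have h1α : (0:ℝ) < 1 - α := by linarith
  have hq : 0 < q := by positivity
  set γ : ℝ := (β - 1) * q with hγdef
  have hγ0 : 0 < γ := by positivity
  have hγ1 : γ < 1 := by
    rw [hγdef, hqdef, mul_one_div, div_lt_one h1α]; linarith
  have hΓ : 0 < Real.Gamma α := Real.Gamma_pos_of_pos hα
  set c₁ : ℝ := 1 / Real.Gamma α with hc₁
  have hc₁0 : 0 < c₁ := by positivity
  have hdivmeas : Measurable fun t : ℝ => A / (t - t₀) :=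
    measurable_const.div (measurable_id.sub measurable_const)
  have hmf : Measurable f := by
    rw [hf]
    exact (measurable_const.div (measurable_id.sub measurable_const)).mul
      ((Real.measurable_log.comp
        (measurable_const.div (measurable_id.sub measurable_const))).pow measurable_const)
  set G : ℝ → ℝ := fun t => c₁ * ((t - t₀) ^ (α - 1) * Fc t) with hG
  have hlogpos : ∀ t, t₀ < t → t ≤ t₁ → 0 < Real.log (A / (t - t₀)) := by
    intro t ht1 ht2
    have hu : 0 < t - t₀ := by linarith
    exact Real.log_pos ((one_lt_div hu).2 (by linarith))
  have hGnn : ∀ t ∈ Set.Ioc t₀ t₁, 0 ≤ G t := by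
    intro t htm
    have hu : 0 < t - t₀ := by linarith [htm.1]
    have hFcp : 0 ≤ Fc t :=
      mul_nonneg hc2.le (Real.rpow_nonneg (hlogpos t htm.1 htm.2).le _)
    exact mul_nonneg hc₁0.le (mul_nonneg (Real.rpow_nonneg hu.le _) hFcp)
  clear_value L A Fc q γ c₁ G
  -- lower bound on RL
  have hlow : ∀ t ∈ Set.Ioc t₀ t₁, G t ≤ RL α t₀ f t := by
    intro t htm
    obtain ⟨ht1, ht2⟩ := htm
    have hu : 0 < t - t₀ := by linarith
    set m : ℝ := (t₀ + t) / 2 with hm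
    have hm1 : t₀ < m := by rw [hm]; linarith
    have hm2 : m < t := by rw [hm]; linarith
    have hm3 : m ≤ t₁ := by linarith
    have hmeas : Measurable (fun s => (t - s) ^ (α - 1) * f s) :=
      ((measurable_const.sub measurable_id).pow measurable_const).mul hmf
    have hker : IntegrableOn (fun s => (t - s) ^ (α - 1) * f s) (Set.Ioc t₀ t) := by
      have hi1 : IntegrableOn (fun s => (t - s) ^ (α - 1) * f s) (Set.Ioc t₀ m) := by
        have hdom : IntegrableOn (fun s => (t - m) ^ (α - 1) * f s) (Set.Ioc t₀ m) :=
          (hint.mono_set (Set.Ioc_subset_Ioc le_rfl hm3)).const_mul _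
        refine hdom.mono' hmeas.aestronglyMeasurable ?_
        rw [ae_restrict_iff' measurableSet_Ioc]
        filter_upwards with s hs
        have hs1 : t₀ < s := hs.1
        have hs2 : s ≤ m := hs.2
        have hfs : 0 ≤ f s := hfnn s ⟨hs1, by linarith⟩
        have htm0 : 0 < t - m := by linarith
        have hrle : (t - s) ^ (α - 1) ≤ (t - m) ^ (α - 1) :=
          Real.rpow_le_rpow_of_nonpos htm0 (by linarith) (by linarith)
        rw [Real.norm_eq_abs, abs_of_nonneg
          (mul_nonneg (Real.rpow_nonneg (by linarith) _) hfs)]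
        exact mul_le_mul_of_nonneg_right hrle hfs
      have hi2 : IntegrableOn (fun s => (t - s) ^ (α - 1) * f s) (Set.Ioc m t) := by
        have hrint : IntegrableOn (fun s => (t - s) ^ (α - 1)) (Set.Ioc m t) := by
          have h0 := (intervalIntegral.intervalIntegrable_rpow'
            (a := t - m) (b := 0) (r := α - 1) (by linarith)).comp_sub_left t
          simp only [sub_sub_cancel, sub_zero] at h0
          rw [intervalIntegrable_iff_integrableOn_Ioc_of_le (by linarith : m ≤ t)] at h0
          exact h0
        set C : ℝ := (A / (m - t₀)) * Real.log 2 ^ (-β) with hC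
        have hdom : IntegrableOn (fun s => (t - s) ^ (α - 1) * C) (Set.Ioc m t) :=
          hrint.mul_const C
        refine hdom.mono' hmeas.aestronglyMeasurable ?_
        rw [ae_restrict_iff' measurableSet_Ioc]
        filter_upwards with s hs
        have hs1 : m < s := hs.1
        have hs2 : s ≤ t := hs.2
        have hus : 0 < s - t₀ := by linarith
        have husL : s - t₀ ≤ L := by rw [hL]; linarith
        have hfs : 0 ≤ f s := hfnn s ⟨by linarith, by linarith⟩
        have hfsC : f s ≤ C := by
          rw [hfA s, hC]
          have h2s : (2:ℝ) ≤ A / (s - t₀) := by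
            rw [le_div_iff₀ hus, hAdef]; nlinarith
          have hlog2 : Real.log 2 ≤ Real.log (A / (s - t₀)) :=
            Real.log_le_log (by norm_num) h2s
          have hrp : Real.log (A / (s - t₀)) ^ (-β) ≤ Real.log 2 ^ (-β) :=
            Real.rpow_le_rpow_of_nonpos (Real.log_pos (by norm_num)) hlog2 (by linarith)
          have hdiv : A / (s - t₀) ≤ A / (m - t₀) :=
            div_le_div_of_nonneg_left hA.le (by linarith) (by linarith)
          exact mul_le_mul hdiv hrp (Real.rpow_nonneg
            (Real.log_nonneg (by linarith [Real.log_pos (show (1:ℝ) < 2 by norm_num),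
              hlog2])) _) (div_nonneg hA.le (by linarith))
        rw [Real.norm_eq_abs, abs_of_nonneg
          (mul_nonneg (Real.rpow_nonneg (by linarith) _) hfs)]
        exact mul_le_mul_of_nonneg_left hfsC (Real.rpow_nonneg (by linarith) _)
      have hunion : Set.Ioc t₀ m ∪ Set.Ioc m t = Set.Ioc t₀ t :=
        Set.Ioc_union_Ioc_eq_Ioc hm1.le hm2.le
      rw [← hunion]
      exact hi1.union hi2
    -- monotonicity of the integral
    have hFt : (∫ s in Set.Ioo t₀ t, f s) = Fc t := by
      rw [← integral_Ioc_eq_integral_Ioo, ← intervalIntegral.integral_of_le ht1.le]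
      exact hFcval t ht1 ht2
    have hmono : (∫ s in Set.Ioo t₀ t, (t - t₀) ^ (α - 1) * f s) ≤
        ∫ s in Set.Ioo t₀ t, (t - s) ^ (α - 1) * f s := by
      have hi0 : IntegrableOn (fun s => (t - t₀) ^ (α - 1) * f s) (Set.Ioc t₀ t) :=
        (hint.mono_set (Set.Ioc_subset_Ioc le_rfl ht2)).const_mul _
      refine setIntegral_mono_on (hi0.mono_set Set.Ioo_subset_Ioc_self)
        (hker.mono_set Set.Ioo_subset_Ioc_self) measurableSet_Ioo ?_
      intro s hs
      have hts : 0 < t - s := by linarith [hs.2]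
      have hrle : (t - t₀) ^ (α - 1) ≤ (t - s) ^ (α - 1) :=
        Real.rpow_le_rpow_of_nonpos hts (by linarith [hs.1]) (by linarith)
      exact mul_le_mul_of_nonneg_right hrle (hfnn s ⟨hs.1, by linarith [hs.2]⟩)
    have e1 : (∫ s in Set.Ioo t₀ t, (t - t₀) ^ (α - 1) * f s) =
        (t - t₀) ^ (α - 1) * Fc t := by
      rw [integral_const_mul, hFt]
    have egoal : G t = c₁ * ((t - t₀) ^ (α - 1) * Fc t) := by rw [hG]
    rw [RL, intervalIntegral.integral_of_le ht1.le, integral_Ioc_eq_integral_Ioo,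
      egoal, ← hc₁]
    refine mul_le_mul_of_nonneg_left ?_ hc₁0.le
    rw [← e1]; exact hmono
  -- rewrite G ^ q
  set K : ℝ := c₁ ^ q * (A / (β - 1)) ^ q with hK
  have hKpos : 0 < K := by
    rw [hK]
    exact mul_pos (Real.rpow_pos_of_pos hc₁0 q) (Real.rpow_pos_of_pos hc2 q)
  clear_value K
  have hGq : ∀ t, t₀ < t → t ≤ t₁ →
      G t ^ q = K * ((t - t₀)⁻¹ * Real.log (A / (t - t₀)) ^ (-γ)) := by
    intro t ht1 ht2
    have hu : 0 < t - t₀ := by linarith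
    have hl : 0 < Real.log (A / (t - t₀)) := hlogpos t ht1 ht2
    have e : G t = (c₁ * (A / (β - 1))) * ((t - t₀) ^ (α - 1) *
        Real.log (A / (t - t₀)) ^ (1 - β)) := by
      rw [hG, hFc]; ring
    rw [e]
    rw [Real.mul_rpow (by positivity) (mul_nonneg (Real.rpow_nonneg hu.le _)
      (Real.rpow_nonneg hl.le _))]
    rw [Real.mul_rpow hc₁0.le (by positivity)]
    rw [Real.mul_rpow (Real.rpow_nonneg hu.le _) (Real.rpow_nonneg hl.le _)]
    rw [← Real.rpow_mul hu.le, ← Real.rpow_mul hl.le]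
    have e1 : (α - 1) * q = -1 := by
      rw [hqdef]; field_simp; ring
    have e2 : (1 - β) * q = -γ := by rw [hγdef]; ring
    rw [e1, e2, Real.rpow_neg_one, hK]
  have hqnn : ∀ t ∈ Set.Ioc t₀ t₁, 0 ≤ G t ^ q :=
    fun t htm => Real.rpow_nonneg (hGnn t htm) q
  -- the function G ^ q is not integrable
  have hnotint : ¬ IntegrableOn (fun t => G t ^ q) (Set.Ioc t₀ t₁) := by
    intro hcon
    set Hc : ℝ → ℝ := fun t =>
      K * -(1 / (1 - γ)) * Real.log (A / (t - t₀)) ^ (1 - γ) with hHc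
    have hHderiv : ∀ t, t₀ < t → t ≤ t₁ → HasDerivAt Hc (G t ^ q) t := by
      intro t ht1 ht2
      have hu : 0 < t - t₀ := by linarith
      have huA : t - t₀ < A := by linarith
      have h1 := ((haslog A (1 - γ) hA hu huA).comp t
        ((hasDerivAt_id t).sub_const t₀)).const_mul (K * -(1 / (1 - γ)))
      have h2 : K * -(1 / (1 - γ)) * ((1 - γ) *
          Real.log (A / (t - t₀)) ^ (1 - γ - 1) * (-1 / (t - t₀)) * 1) = G t ^ q := by
        rw [hGq t ht1 ht2]
        have he : (1 - γ - 1 : ℝ) = -γ := by ring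
        rw [he]
        have h1γ : (1:ℝ) - γ ≠ 0 := by linarith
        have hstep : K * -(1 / (1 - γ)) * ((1 - γ) *
            Real.log (A / (t - t₀)) ^ (-γ) * (-1 / (t - t₀)) * 1)
            = K * ((1 - γ) / (1 - γ)) * ((t - t₀)⁻¹ *
              Real.log (A / (t - t₀)) ^ (-γ)) := by
          rw [div_eq_mul_inv, div_eq_mul_inv, div_eq_mul_inv]; ring
        rw [hstep, div_self h1γ, mul_one]
      rw [h2] at h1
      exact h1
    clear_value Hc
    set M : ℝ := ∫ t in Set.Ioc t₀ t₁, G t ^ q with hM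
    clear_value M
    have hbound : ∀ ε, 0 < ε → ε < L → Hc t₁ - Hc (t₀ + ε) ≤ M := by
      intro ε hε hεL
      have hab : t₀ + ε ≤ t₁ := by rw [hL] at hεL; linarith
      have h1 : (∫ s in (t₀ + ε)..t₁, G s ^ q) = Hc t₁ - Hc (t₀ + ε) := by
        apply intervalIntegral.integral_eq_sub_of_hasDerivAt
        · intro x hx
          rw [Set.uIcc_of_le hab] at hx
          exact hHderiv x (by linarith [hx.1]) hx.2
        · rw [intervalIntegrable_iff_integrableOn_Ioc_of_le hab]
          exact hcon.mono_set (Set.Ioc_subset_Ioc (by linarith) le_rfl)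
      have h2 : (∫ s in (t₀ + ε)..t₁, G s ^ q) ≤ M := by
        rw [intervalIntegral.integral_of_le hab, hM]
        refine setIntegral_mono_set hcon ?_ ?_
        · rw [EventuallyLE, ae_restrict_iff' measurableSet_Ioc]
          filter_upwards with s hs using hqnn s hs
        · exact (Set.Ioc_subset_Ioc (by linarith) le_rfl).eventuallyLE
      linarith
    have htend : Tendsto (fun ε => Hc t₁ - Hc (t₀ + ε)) (nhdsWithin 0 (Set.Ioi (0:ℝ)))
        atTop := by
      have h1 : Tendsto (fun ε : ℝ => A / ε) (nhdsWithin 0 (Set.Ioi (0:ℝ))) atTop := by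
        simpa [div_eq_mul_inv] using (tendsto_inv_nhdsGT_zero (𝕜 := ℝ)).const_mul_atTop hA
      have h2 : Tendsto (fun ε : ℝ => Real.log (A / ε) ^ (1 - γ))
          (nhdsWithin 0 (Set.Ioi (0:ℝ))) atTop :=
        (tendsto_rpow_atTop (by linarith)).comp (Real.tendsto_log_atTop.comp h1)
      have h3 : Tendsto (fun ε : ℝ => Hc (t₀ + ε)) (nhdsWithin 0 (Set.Ioi (0:ℝ)))
          atBot := by
        have h4 := h2.const_mul_atTop_of_neg
          (show K * -(1 / (1 - γ)) < 0 by
            have h1γ : (0:ℝ) < 1 - γ := by linarith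
            have hp : 0 < K * (1 / (1 - γ)) := mul_pos hKpos (by positivity)
            rw [mul_neg]
            exact neg_lt_zero.mpr hp)
        apply h4.congr
        intro ε
        rw [hHc]; simp
      have h5 := tendsto_neg_atBot_atTop.comp h3
      have h6 := tendsto_atTop_add_const_left _ (Hc t₁) h5
      apply h6.congr
      intro ε; simp [sub_eq_add_neg]
    obtain ⟨ε, hεgt, hεm⟩ := ((htend.eventually_gt_atTop M).and
      (Ioo_mem_nhdsGT_of_mem ⟨le_refl (0:ℝ), hL0⟩ : Set.Ioo (0:ℝ) L ∈
        nhdsWithin 0 (Set.Ioi (0:ℝ)))).exists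
    exact absurd (hbound ε hεm.1 hεm.2) (not_le.2 hεgt)
  -- conclude
  have hpne : (ENNReal.ofReal q) ≠ 0 := (ENNReal.ofReal_pos.2 hq).ne'
  have h2 := hmem.2
  rw [eLpNorm_eq_lintegral_rpow_enorm_toReal hpne ENNReal.ofReal_ne_top] at h2
  rw [ENNReal.toReal_ofReal hq.le] at h2
  have hFcmeas : Measurable Fc := by
    rw [hFc]
    exact ((Real.measurable_log.comp hdivmeas).pow measurable_const).const_mul _
  have hGmeas : Measurable (fun t => G t ^ q) := by
    rw [hG]
    exact ((((measurable_id.sub measurable_const).pow measurable_const).mul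
      hFcmeas).const_mul c₁).pow measurable_const
  have htop : (∫⁻ t, ENNReal.ofReal (G t ^ q)
      ∂(volume.restrict (Set.Ioc t₀ t₁))) = ⊤ := by
    by_contra hne
    apply hnotint
    refine ⟨hGmeas.aestronglyMeasurable, ?_⟩
    rw [hasFiniteIntegral_iff_ofReal ?_]
    · exact lt_top_iff_ne_top.2 hne
    · rw [EventuallyLE, ae_restrict_iff' measurableSet_Ioc]
      filter_upwards with t htm using hqnn t htm
  have hle : (∫⁻ t, ENNReal.ofReal (G t ^ q) ∂(volume.restrict (Set.Ioc t₀ t₁))) ≤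
      ∫⁻ t, ‖RL α t₀ f t‖ₑ ^ q ∂(volume.restrict (Set.Ioc t₀ t₁)) := by
    apply lintegral_mono_ae
    rw [ae_restrict_iff' measurableSet_Ioc]
    filter_upwards with t htm
    have hGt : G t ≤ ‖RL α t₀ f t‖ :=
      le_trans (hlow t htm) (le_abs_self _)
    calc ENNReal.ofReal (G t ^ q) ≤ ENNReal.ofReal (‖RL α t₀ f t‖ ^ q) :=
        ENNReal.ofReal_le_ofReal (Real.rpow_le_rpow (hGnn t htm) hGt hq.le)
      _ = ‖RL α t₀ f t‖ₑ ^ q := by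
        rw [← ENNReal.ofReal_rpow_of_nonneg (norm_nonneg _) hq.le,
          ofReal_norm]
  have heq : (∫⁻ t, ‖RL α t₀ f t‖ₑ ^ q
      ∂(volume.restrict (Set.Ioc t₀ t₁))) = ⊤ :=
    eq_top_iff.2 (htop ▸ hle)
  rw [heq] at h2
  rw [ENNReal.top_rpow_of_pos (by positivity)] at h2
  exact absurd h2 (lt_irrefl ⊤)
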